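/- If f is a Lipschitz quotient map from a Banach space X onto a Banach space Y that is ε-Fréchet differentiable at a point x₀ with operator T and co-Lipschitz constant λ, and ε < λ, then T is a linear quotient map: the closed unit ball of Y is contained in (λ - ε)⁻¹ · closure of T(unit ball of X); in particular T is surjective. -/

import Mathlib

open NNReal Pointwise Filter Topology

/-- Iteration lemma: if every `v` of norm `< lam` can be `ε`-approximated by `T u` with
`‖u‖ ≤ 1`, then (for `q` with `ε < lam * q < lam`) every such `v` has an exact preimage of
norm at most `(1 - q)⁻¹`. -/
lemma aux_key {X Y : Type*} [NormedAddCommGroup X] [NormedSpace ℝ X] [CompleteSpace X]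
    [NormedAddCommGroup Y] [NormedSpace ℝ Y]
    (T : X →L[ℝ] Y) (lam ε : ℝ)
    (A : ∀ v : Y, ‖v‖ < lam → ∃ u : X, ‖u‖ ≤ 1 ∧ ‖v - T u‖ ≤ ε)
    (q : ℝ) (hq0 : 0 < q) (hq1 : q < 1) (hεq : ε < lam * q)
    (v : Y) (hv : ‖v‖ < lam) : ∃ u : X, ‖u‖ ≤ (1 - q)⁻¹ ∧ T u = v := by
  have hqn : ∀ n : ℕ, (0:ℝ) < q ^ n := fun n => pow_pos hq0 n
  have step : ∀ (n : ℕ) (r : Y), ‖r‖ < lam * q ^ n →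
      ∃ u : X, ‖u‖ ≤ q ^ n ∧ ‖r - T u‖ < lam * q ^ (n + 1) := by
    intro n r hr
    obtain ⟨w, hw1, hw2⟩ := A ((q ^ n)⁻¹ • r) (by
      rw [norm_smul, Real.norm_eq_abs, abs_of_pos (inv_pos.2 (hqn n)),
        inv_mul_lt_iff₀ (hqn n)]
      nlinarith [hqn n])
    refine ⟨(q ^ n) • w, ?_, ?_⟩
    · rw [norm_smul, Real.norm_eq_abs, abs_of_pos (hqn n)]
      nlinarith [hqn n]
    · have heq : r - T ((q ^ n) • w) = (q ^ n) • ((q ^ n)⁻¹ • r - T w) := by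
        rw [map_smul, smul_sub, smul_smul, mul_inv_cancel₀ (ne_of_gt (hqn n)), one_smul]
      rw [heq, norm_smul, Real.norm_eq_abs, abs_of_pos (hqn n), pow_succ, ← mul_assoc,
        mul_comm lam (q ^ n), mul_assoc]
      have : (q:ℝ) ^ n * ε < q ^ n * (q * lam) := by
        apply mul_lt_mul_of_pos_left _ (hqn n)
        nlinarith
      nlinarith [hqn n]
  let Rr : (n : ℕ) → {r : Y // ‖r‖ < lam * q ^ n} := fun n =>
    Nat.rec ⟨v, by simpa using hv⟩
      (fun n p => ⟨p.1 - T (Classical.choose (step n p.1 p.2)),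
        (Classical.choose_spec (step n p.1 p.2)).2⟩) n
  let u : ℕ → X := fun n => Classical.choose (step n (Rr n).1 (Rr n).2)
  have hu1 : ∀ n, ‖u n‖ ≤ q ^ n := fun n =>
    (Classical.choose_spec (step n (Rr n).1 (Rr n).2)).1
  have hRsucc : ∀ n, (Rr (n+1)).1 = (Rr n).1 - T (u n) := fun n => rfl
  have hR0 : (Rr 0).1 = v := rfl
  have hsum : ∀ n, ∑ k ∈ Finset.range n, T (u k) = v - (Rr n).1 := by
    intro n
    induction n with
    | zero => simp [hR0]
    | succ n ih =>
      rw [Finset.sum_range_succ, ih, hRsucc n]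
      abel
  have hgeom : Summable (fun n : ℕ => q ^ n) := summable_geometric_of_lt_one hq0.le hq1
  have hsummable : Summable u := Summable.of_norm_bounded hgeom hu1
  have hnormsummable : Summable (fun n => ‖u n‖) :=
    Summable.of_nonneg_of_le (fun n => norm_nonneg _) hu1 hgeom
  set s := ∑' n, u n with hs
  have hsnorm : ‖s‖ ≤ (1 - q)⁻¹ := by
    calc ‖s‖ ≤ ∑' n, ‖u n‖ := norm_tsum_le_tsum_norm hnormsummable
      _ ≤ ∑' n : ℕ, q ^ n := Summable.tsum_le_tsum hu1 hnormsummable hgeom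
      _ = (1 - q)⁻¹ := tsum_geometric_of_lt_one hq0.le hq1
  have h1 : HasSum (fun n => T (u n)) (T s) := T.hasSum hsummable.hasSum
  have h2 : Tendsto (fun n => ∑ k ∈ Finset.range n, T (u k)) atTop (𝓝 (T s)) :=
    h1.tendsto_sum_nat
  have hRlim : Tendsto (fun n => (Rr n).1) atTop (𝓝 0) := by
    apply squeeze_zero_norm (fun n => (Rr n).2.le)
    have := (tendsto_pow_atTop_nhds_zero_of_lt_one hq0.le hq1).const_mul lam
    simpa using this
  have h3 : Tendsto (fun n => v - (Rr n).1) atTop (𝓝 v) := by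
    simpa using tendsto_const_nhds.sub hRlim
  have h2' : Tendsto (fun n => v - (Rr n).1) atTop (𝓝 (T s)) := by
    simpa only [hsum] using h2
  exact ⟨s, hsnorm, tendsto_nhds_unique h2' h3⟩

/-- A Lipschitz quotient map that is `ε`-Fréchet differentiable at a point with `ε < λ`
has a differential that is a linear quotient map. -/
theorem stmt_7 {X Y : Type*} [NormedAddCommGroup X] [NormedSpace ℝ X] [CompleteSpace X]
    [NormedAddCommGroup Y] [NormedSpace ℝ Y] [CompleteSpace Y]
    (f : X → Y) (K : ℝ≥0) (hf : LipschitzWith K f)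
    (lam : ℝ) (hlam : 0 < lam)
    (hco : ∀ (x : X) (r : ℝ), 0 < r → Metric.ball (f x) (lam * r) ⊆ f '' Metric.ball x r)
    (x₀ : X) (T : X →L[ℝ] Y) (ε : ℝ) (hε : ε < lam)
    (δ : ℝ) (hδ : 0 < δ)
    (hdiff : ∀ u : X, ‖u‖ ≤ δ → ‖f (x₀ + u) - f x₀ - T u‖ ≤ ε * ‖u‖) :
    Metric.closedBall (0 : Y) 1 ⊆
      (lam - ε)⁻¹ • closure (T '' Metric.closedBall (0 : X) 1) ∧
    Function.Surjective T := by
  have hlamε : (0:ℝ) < lam - ε := by linarith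
  by_cases hε0 : 0 ≤ ε
  · -- main case
    -- Claim A: approximate preimages
    have A : ∀ v : Y, ‖v‖ < lam → ∃ u : X, ‖u‖ ≤ 1 ∧ ‖v - T u‖ ≤ ε := by
      intro v hv
      have hz : f x₀ + δ • v ∈ Metric.ball (f x₀) (lam * δ) := by
        rw [Metric.mem_ball, dist_eq_norm, add_sub_cancel_left, norm_smul, Real.norm_eq_abs,
          abs_of_pos hδ]
        nlinarith
      obtain ⟨x, hx, hfx⟩ := hco x₀ δ hδ hz
      rw [Metric.mem_ball, dist_eq_norm] at hx
      have hd := hdiff (x - x₀) hx.le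
      rw [add_sub_cancel, hfx] at hd
      have hd' : ‖δ • v - T (x - x₀)‖ ≤ ε * δ := by
        have heq : f x₀ + δ • v - f x₀ - T (x - x₀) = δ • v - T (x - x₀) := by abel
        rw [heq] at hd
        have : ε * ‖x - x₀‖ ≤ ε * δ := mul_le_mul_of_nonneg_left hx.le hε0
        linarith
      refine ⟨δ⁻¹ • (x - x₀), ?_, ?_⟩
      · rw [norm_smul, Real.norm_eq_abs, abs_of_pos (inv_pos.2 hδ), inv_mul_le_iff₀ hδ,
          mul_one]
        exact hx.le
      · have heq : v - T (δ⁻¹ • (x - x₀)) = δ⁻¹ • (δ • v - T (x - x₀)) := by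
          rw [map_smul, smul_sub, smul_smul, inv_mul_cancel₀ (ne_of_gt hδ), one_smul]
        rw [heq, norm_smul, Real.norm_eq_abs, abs_of_pos (inv_pos.2 hδ),
          inv_mul_le_iff₀ hδ]
        linarith [hd']
    -- Exact membership for norms strictly below lam - ε
    have hS0 : ∀ w : Y, ‖w‖ < lam - ε → w ∈ T '' Metric.closedBall (0 : X) 1 := by
      intro w hw
      set q := (ε / lam + (lam - ‖w‖) / lam) / 2 with hq
      have h₁ : ε / lam < (lam - ‖w‖) / lam :=
        (div_lt_div_iff_of_pos_right hlam).2 (by linarith)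
      have h0 : 0 ≤ ε / lam := div_nonneg hε0 hlam.le
      have hqε : ε / lam < q := by rw [hq]; linarith
      have hq2 : q < (lam - ‖w‖) / lam := by rw [hq]; linarith
      have hq0 : 0 < q := lt_of_le_of_lt h0 hqε
      have hq1 : q < 1 :=
        lt_of_lt_of_le hq2 (by rw [div_le_one hlam]; linarith [norm_nonneg w])
      have hεq : ε < lam * q := by
        have := (div_lt_iff₀ hlam).1 hqε
        linarith
      have hv : ‖(1 - q)⁻¹ • w‖ < lam := by
        have h1q : (0:ℝ) < 1 - q := by linarith
        rw [norm_smul, Real.norm_eq_abs, abs_of_pos (inv_pos.2 h1q),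
          inv_mul_lt_iff₀ h1q]
        have := (lt_div_iff₀ hlam).1 hq2
        nlinarith
      obtain ⟨u, hu, hTu⟩ := aux_key T lam ε A q hq0 hq1 hεq _ hv
      have h1q : (0:ℝ) < 1 - q := by linarith
      refine ⟨(1 - q) • u, ?_, ?_⟩
      · rw [Metric.mem_closedBall, dist_zero_right, norm_smul, Real.norm_eq_abs,
          abs_of_pos h1q]
        calc (1 - q) * ‖u‖ ≤ (1 - q) * (1 - q)⁻¹ :=
              mul_le_mul_of_nonneg_left hu h1q.le
          _ = 1 := mul_inv_cancel₀ (ne_of_gt h1q)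
      · rw [map_smul, hTu, smul_smul, mul_inv_cancel₀ (ne_of_gt h1q), one_smul]
    constructor
    · intro y hy
      rw [Metric.mem_closedBall, dist_zero_right] at hy
      have hcl : (lam - ε) • y ∈ closure (T '' Metric.closedBall (0 : X) 1) := by
        have ht : Tendsto (fun n : ℕ => (1 - 1/((n:ℝ)+1))) atTop (𝓝 1) := by
          have h := tendsto_one_div_add_atTop_nhds_zero_nat (𝕜 := ℝ)
          simpa using tendsto_const_nhds.sub h
        have hseq : Tendsto (fun n : ℕ => (1 - 1/((n:ℝ)+1)) • ((lam - ε) • y)) atTop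
            (𝓝 ((lam - ε) • y)) := by
          simpa using ht.smul_const ((lam - ε) • y)
        apply mem_closure_of_tendsto hseq
        filter_upwards with n
        apply hS0
        have hn1 : (0:ℝ) < 1/((n:ℝ)+1) := by positivity
        have hn2 : 1/((n:ℝ)+1) ≤ 1 := by
          rw [div_le_one (by positivity)]
          linarith [Nat.cast_nonneg (α := ℝ) n]
        rw [norm_smul, norm_smul, Real.norm_eq_abs, Real.norm_eq_abs,
          abs_of_nonneg (by linarith : (0:ℝ) ≤ 1 - 1/((n:ℝ)+1)), abs_of_pos hlamε]
        nlinarith [norm_nonneg y, hy, hn1, hlamε,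
          mul_le_mul_of_nonneg_left hy (by linarith : (0:ℝ) ≤ 1 - 1/((n:ℝ)+1))]
      exact Set.mem_smul_set.mpr ⟨(lam - ε) • y, hcl, by
        rw [smul_smul, inv_mul_cancel₀ (ne_of_gt hlamε), one_smul]⟩
    · intro y
      set c := lam / (2 * (‖y‖ + 1)) with hc
      have hc0 : 0 < c := div_pos hlam (by positivity)
      have hv : ‖c • y‖ < lam := by
        rw [norm_smul, Real.norm_eq_abs, abs_of_pos hc0, hc, div_mul_eq_mul_div,
          div_lt_iff₀ (by positivity)]
        nlinarith [norm_nonneg y]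
      set q := (ε / lam + 1) / 2 with hqdef
      have h0 : 0 ≤ ε / lam := div_nonneg hε0 hlam.le
      have h1 : ε / lam < 1 := (div_lt_one hlam).2 hε
      have hεq : ε < lam * q := by
        have hq' : ε / lam < q := by rw [hqdef]; linarith
        have := (div_lt_iff₀ hlam).1 hq'
        linarith
      obtain ⟨u, _, hTu⟩ := aux_key T lam ε A q (by rw [hqdef]; linarith)
        (by rw [hqdef]; linarith) hεq _ hv
      exact ⟨c⁻¹ • u, by
        rw [map_smul, hTu, smul_smul, inv_mul_cancel₀ (ne_of_gt hc0), one_smul]⟩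
  · -- degenerate case ε < 0 : X and Y are trivial
    push_neg at hε0
    have hX : ∀ u : X, u = 0 := by
      intro u
      by_contra hu
      have hn : 0 < ‖u‖ := norm_pos_iff.2 hu
      set u' := (δ / ‖u‖) • u with hu'def
      have hu' : ‖u'‖ = δ := by
        rw [hu'def, norm_smul, Real.norm_eq_abs, abs_of_pos (div_pos hδ hn),
          div_mul_cancel₀ _ (ne_of_gt hn)]
      have hdd := hdiff u' (le_of_eq hu')
      rw [hu'] at hdd
      nlinarith [norm_nonneg (f (x₀ + u') - f x₀ - T u')]
    have hY : ∀ y : Y, y = f x₀ := by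
      intro y
      have hr : (0:ℝ) < (‖y - f x₀‖ + 1) / lam := div_pos (by positivity) hlam
      have hy : y ∈ Metric.ball (f x₀) (lam * ((‖y - f x₀‖ + 1) / lam)) := by
        rw [Metric.mem_ball, dist_eq_norm, mul_div_cancel₀ _ (ne_of_gt hlam)]
        linarith
      obtain ⟨x, _, hfx⟩ := hco x₀ _ hr hy
      rw [← hfx, hX x, hX x₀]
    constructor
    · intro y _
      refine Set.mem_smul_set.mpr ⟨(lam - ε) • y, ?_, ?_⟩
      · apply subset_closure
        refine ⟨0, by simp, ?_⟩
        rw [map_zero]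
        exact ((hY 0).trans (hY ((lam - ε) • y)).symm)
      · rw [smul_smul, inv_mul_cancel₀ (ne_of_gt hlamε), one_smul]
    · intro y
      refine ⟨0, ?_⟩
      rw [map_zero]
      exact ((hY 0).trans (hY y).symm)
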